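/- If a sequence (s_k) of complex numbers satisfies (1/n) Σ_{k=1}^n s_k → A as n → ∞, then it is also summable (L,1) to A: (1/ℓ_n) Σ_{k=1}^n s_k/k → A, where ℓ_n := Σ_{k=1}^n 1/k. -/

import Mathlib

open Filter Finset Asymptotics

-- Abel summation identity
lemma abel_id (s : ℕ → ℂ) (n : ℕ) :
    ∑ k ∈ Finset.Icc 1 n, s k / (k : ℂ) =
      (∑ k ∈ Finset.Icc 1 n, s k) / ((n : ℂ) + 1) +
      ∑ k ∈ Finset.Icc 1 n, ((k : ℂ)⁻¹ * ∑ j ∈ Finset.Icc 1 k, s j) / ((k : ℂ) + 1) := by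
  induction n with
  | zero => simp
  | succ n ih =>
      have hS : ∑ k ∈ Finset.Icc 1 (n+1), s k
          = (∑ k ∈ Finset.Icc 1 n, s k) + s (n+1) :=
        Finset.sum_Icc_succ_top (by omega) _
      rw [Finset.sum_Icc_succ_top (by omega : 1 ≤ n + 1),
        Finset.sum_Icc_succ_top (by omega : 1 ≤ n + 1) (fun k => ((k : ℂ)⁻¹ * ∑ j ∈ Finset.Icc 1 k, s j) / ((k : ℂ) + 1)),
        hS, ih]
      have h1 : ((n : ℂ) + 1) ≠ 0 := Nat.cast_add_one_ne_zero n
      have h2 : ((n : ℂ) + 1 + 1) ≠ 0 := by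
        have := Nat.cast_add_one_ne_zero (R := ℂ) (n + 1)
        push_cast at this
        exact this
      push_cast
      field_simp
      ring

lemma telescope_id (n : ℕ) :
    ∑ k ∈ Finset.Icc 1 n, ((1 : ℂ) / ((k : ℂ) + 1) - 1 / (k : ℂ)) = 1 / ((n : ℂ) + 1) - 1 := by
  induction n with
  | zero => simp
  | succ n ih =>
      rw [Finset.sum_Icc_succ_top (by omega : 1 ≤ n + 1), ih]
      have h1 : ((n : ℂ) + 1) ≠ 0 := Nat.cast_add_one_ne_zero n
      have h2 : ((n : ℂ) + 1 + 1) ≠ 0 := by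
        have := Nat.cast_add_one_ne_zero (R := ℂ) (n + 1)
        push_cast at this
        exact this
      push_cast
      field_simp
      ring



lemma icc_range {M : Type*} [AddCommMonoid M] (f : ℕ → M) (n : ℕ) :
    ∑ k ∈ Finset.Icc 1 n, f k = ∑ i ∈ Finset.range n, f (i + 1) := by
  rw [← Finset.Ico_add_one_right_eq_Icc, Finset.sum_Ico_eq_sum_range]
  exact Finset.sum_congr (by norm_num) fun i _ => by rw [add_comm]

lemma harmonic_tendsto_atTop :
    Tendsto (fun n : ℕ => ∑ k ∈ Finset.Icc 1 n, (1:ℝ)/k) atTop atTop := by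
  have h := Real.tendsto_sum_range_one_div_nat_succ_atTop
  refine h.congr fun n => ?_
  rw [icc_range]
  exact Finset.sum_congr rfl fun i _ => by push_cast; ring

lemma aux_sum_o (t : ℕ → ℂ) (ht : Tendsto t atTop (nhds 0)) :
    (fun n => ∑ k ∈ Finset.Icc 1 n, t k / ((k:ℂ)+1)) =o[atTop]
      (fun n => ∑ k ∈ Finset.Icc 1 n, (1:ℝ)/k) := by
  have hFG : (fun i : ℕ => t (i+1) / (((i:ℂ)+1)+1)) =o[atTop] (fun i : ℕ => (1:ℝ)/((i:ℝ)+1)) := by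
    have h1 : (fun i : ℕ => t (i+1)) =o[atTop] (fun _ : ℕ => (1:ℝ)) :=
      (isLittleO_one_iff ℝ).2 (ht.comp (tendsto_add_atTop_nat 1))
    have h2 : (fun i : ℕ => (((i:ℂ)+1)+1)⁻¹) =O[atTop] (fun i : ℕ => (1:ℝ)/((i:ℝ)+1)) := by
      apply isBigO_of_le
      intro i
      have e : (((i:ℂ)+1)+1) = (((i:ℝ)+2 : ℝ) : ℂ) := by push_cast; ring
      rw [e, norm_inv, Complex.norm_real]
      have : (0:ℝ) < (i:ℝ)+1 := by positivity
      rw [Real.norm_of_nonneg (by positivity), Real.norm_of_nonneg (by positivity)]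
      rw [one_div]
      gcongr
      linarith
    have := h1.mul_isBigO h2
    simpa [div_eq_mul_inv] using this
  have hG0 : (0:ℕ → ℝ) ≤ fun i : ℕ => (1:ℝ)/((i:ℝ)+1) := fun i => by positivity
  have hGtop : Tendsto (fun n => ∑ i ∈ Finset.range n, (1:ℝ)/((i:ℝ)+1)) atTop atTop :=
    Real.tendsto_sum_range_one_div_nat_succ_atTop
  have hsum := hFG.sum_range hG0 hGtop
  refine hsum.congr (fun n => ?_) (fun n => ?_)
  · rw [icc_range (fun k => t k / ((k:ℂ)+1))]
    exact Finset.sum_congr rfl fun i _ => by push_cast; ring_nf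
  · rw [icc_range (fun k => (1:ℝ)/(k:ℝ))]
    exact Finset.sum_congr rfl fun i _ => by push_cast; ring



theorem cesaro_implies_logarithmic_seq
    (s : ℕ → ℂ) (A : ℂ)
    (hC1 : Tendsto (fun n : ℕ => ((n : ℂ))⁻¹ * ∑ k ∈ Finset.Icc 1 n, s k)
      atTop (nhds A)) :
    Tendsto (fun n : ℕ =>
        (((∑ k ∈ Finset.Icc 1 n, (1:ℝ) / k) : ℝ) : ℂ)⁻¹ *
          ∑ k ∈ Finset.Icc 1 n, s k / (k : ℂ))
      atTop (nhds A) := by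
  set L : ℕ → ℝ := fun n => ∑ k ∈ Finset.Icc 1 n, (1:ℝ)/k with hLdef
  set t : ℕ → ℂ := fun m => ((m : ℂ))⁻¹ * (∑ k ∈ Finset.Icc 1 m, s k) - A with htdef
  have ht : Tendsto t atTop (nhds 0) := by
    have := hC1.sub (tendsto_const_nhds (x := A))
    simpa using this
  have hLtop : Tendsto L atTop atTop := harmonic_tendsto_atTop
  -- key identity
  have hLC : ∀ n : ℕ, ((L n : ℝ) : ℂ) = ∑ k ∈ Finset.Icc 1 n, (1:ℂ)/(k:ℂ) := by
    intro n
    simp only [hLdef]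
    push_cast
    rfl
  have hE : ∀ n : ℕ, (∑ k ∈ Finset.Icc 1 n, s k / (k:ℂ)) - A * ((L n : ℝ) : ℂ)
      = ((∑ k ∈ Finset.Icc 1 n, s k)/((n:ℂ)+1) + A * (1/((n:ℂ)+1) - 1))
        + ∑ k ∈ Finset.Icc 1 n, t k / ((k:ℂ)+1) := by
    intro n
    rw [abel_id, hLC]
    have h1 : ∀ k ∈ Finset.Icc 1 n, ((k:ℂ)⁻¹ * ∑ j ∈ Finset.Icc 1 k, s j)/((k:ℂ)+1)
        = t k/((k:ℂ)+1) + A*((1:ℂ)/((k:ℂ)+1) - 1/(k:ℂ)) + A*((1:ℂ)/(k:ℂ)) := by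
      intro k hk
      have hk1 : 1 ≤ k := (Finset.mem_Icc.mp hk).1
      have hk0 : (k:ℂ) ≠ 0 := by
        exact_mod_cast Nat.cast_ne_zero.mpr (by omega)
      have hk2 : (k:ℂ)+1 ≠ 0 := Nat.cast_add_one_ne_zero k
      simp only [htdef]
      field_simp
      ring
    rw [Finset.sum_congr rfl h1]
    rw [Finset.sum_add_distrib, Finset.sum_add_distrib, ← Finset.mul_sum, ← Finset.mul_sum,
      telescope_id]
    ring
  -- bounded part tends to 0
  have hinv : Tendsto (fun n : ℕ => (((n:ℂ))+1)⁻¹) atTop (nhds 0) := by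
    rw [tendsto_zero_iff_norm_tendsto_zero]
    have : ∀ n : ℕ, ‖(((n:ℂ))+1)⁻¹‖ = 1/((n:ℝ)+1) := by
      intro n
      have e : ((n:ℂ)+1) = (((n:ℝ)+1 : ℝ) : ℂ) := by push_cast; ring
      rw [e, norm_inv, Complex.norm_real, Real.norm_of_nonneg (by positivity), one_div]
    simp only [this]
    exact tendsto_one_div_add_atTop_nhds_zero_nat
  have hP : Tendsto (fun n : ℕ => (∑ k ∈ Finset.Icc 1 n, s k)/((n:ℂ)+1)
      + A * (1/((n:ℂ)+1) - 1)) atTop (nhds 0) := by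
    have h1 : Tendsto (fun n : ℕ => ((t n + A) * (1 - ((n:ℂ)+1)⁻¹))
        + A * (((n:ℂ)+1)⁻¹ - 1)) atTop (nhds ((0 + A) * (1 - 0) + A * (0 - 1))) := by
      exact ((ht.add tendsto_const_nhds).mul (tendsto_const_nhds.sub hinv)).add
        (tendsto_const_nhds.mul (hinv.sub tendsto_const_nhds))
    have h2 : ((0 + A) * (1 - 0) + A * (0 - 1) : ℂ) = 0 := by ring
    rw [h2] at h1
    refine h1.congr' ?_
    filter_upwards [eventually_ge_atTop 1] with n hn
    have hn0 : (n:ℂ) ≠ 0 := Nat.cast_ne_zero.mpr (by omega)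
    have hn1 : (n:ℂ)+1 ≠ 0 := Nat.cast_add_one_ne_zero n
    simp only [htdef]
    field_simp
    ring
  -- assemble littleO
  have hnormL : Tendsto (fun n => ‖L n‖) atTop atTop :=
    tendsto_atTop_mono (fun n => le_abs_self _) hLtop
  have hPo : (fun n : ℕ => (∑ k ∈ Finset.Icc 1 n, s k)/((n:ℂ)+1)
      + A * (1/((n:ℂ)+1) - 1)) =o[atTop] L :=
    (hP.isBigO_one ℝ).trans_isLittleO (isLittleO_const_left.2 (Or.inr hnormL))
  have hEo : (fun n : ℕ => (∑ k ∈ Finset.Icc 1 n, s k / (k:ℂ)) - A * ((L n : ℝ) : ℂ))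
      =o[atTop] L := by
    have := hPo.add (aux_sum_o t ht)
    exact (this.congr (fun n => (hE n).symm) (fun n => by simp))
  have hEoC : (fun n : ℕ => (∑ k ∈ Finset.Icc 1 n, s k / (k:ℂ)) - A * ((L n : ℝ) : ℂ))
      =o[atTop] (fun n => ((L n : ℝ) : ℂ)) := by
    refine hEo.trans_isBigO (isBigO_of_le _ fun n => ?_)
    rw [Complex.norm_real]
  have hdiv : Tendsto (fun n : ℕ =>
      ((∑ k ∈ Finset.Icc 1 n, s k / (k:ℂ)) - A * ((L n : ℝ) : ℂ)) / ((L n : ℝ) : ℂ))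
      atTop (nhds 0) := hEoC.tendsto_div_nhds_zero
  have hfin : Tendsto (fun n : ℕ =>
      ((∑ k ∈ Finset.Icc 1 n, s k / (k:ℂ)) - A * ((L n : ℝ) : ℂ)) / ((L n : ℝ) : ℂ) + A)
      atTop (nhds A) := by
    have := hdiv.add (tendsto_const_nhds (x := A))
    simpa using this
  refine hfin.congr' ?_
  filter_upwards [eventually_ge_atTop 1] with n hn
  have hLpos : 0 < L n := by
    apply Finset.sum_pos
    · intro k hk
      have : 1 ≤ k := (Finset.mem_Icc.mp hk).1
      have : (0:ℝ) < k := by exact_mod_cast Nat.pos_of_ne_zero (by omega)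
      positivity
    · exact ⟨1, Finset.mem_Icc.mpr ⟨le_refl 1, hn⟩⟩
  have hLne : ((L n : ℝ) : ℂ) ≠ 0 := by
    exact_mod_cast Complex.ofReal_ne_zero.mpr hLpos.ne'
  rw [sub_div, mul_div_assoc, div_self hLne, mul_one, sub_add_cancel, div_eq_inv_mul]
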